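/- Let n : ℕ and p : Fin n → ℕ be injective with p i prime and p i > 2 for every i. Then for every function c : Fin n → Fin 3 there exists t : ℕ with t < ∏_{i : Fin n} p i such that col t (p i) = c i for all i. That is, the map sending a number t ∈ {0, …, (∏ᵢ pᵢ) − 1} to the 3-coloring i ↦ col t (p i) is surjective onto all 3-colorings of the n vertices. -/

import Mathlib

/-- The color of `t` modulo `q`: `0` if `t % q = 0`, `1` if `t % q = 1`,
and `2` otherwise. -/
def col (t q : ℕ) : Fin 3 :=
  if t % q = 0 then 0 else if t % q = 1 then 1 else 2

/-- For pairwise distinct odd primes `p i`, every 3-coloring `c` of the `n`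
vertices is realized as `i ↦ col t (p i)` for some `t < ∏ i, p i`. -/
theorem col_surjective (n : ℕ) (p : Fin n → ℕ) (hp : Function.Injective p)
    (hprime : ∀ i, (p i).Prime) (hbig : ∀ i, 2 < p i) (c : Fin n → Fin 3) :
    ∃ t : ℕ, t < ∏ i : Fin n, p i ∧ ∀ i : Fin n, col t (p i) = c i := by
  have hs : ∀ i ∈ Finset.univ, p i ≠ 0 := fun i _ => (hprime i).ne_zero
  have pp : Set.Pairwise (Finset.univ : Finset (Fin n)) (Function.onFun Nat.Coprime p) := by
    intro i _ j _ hij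
    exact (Nat.coprime_primes (hprime i) (hprime j)).2 (fun h => hij (hp h))
  refine ⟨Nat.chineseRemainderOfFinset (fun i => (c i : ℕ)) p Finset.univ hs pp, ?_, ?_⟩
  · simpa using Nat.chineseRemainderOfFinset_lt_prod (fun i => (c i : ℕ)) p hs pp
  · intro i
    have h := (Nat.chineseRemainderOfFinset (fun i => (c i : ℕ)) p Finset.univ hs pp).2 i (Finset.mem_univ i)
    have hmod : (Nat.chineseRemainderOfFinset (fun i => (c i : ℕ)) p Finset.univ hs pp : ℕ) % p i = (c i : ℕ) := by
      have : (c i : ℕ) % p i = (c i : ℕ) :=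
        Nat.mod_eq_of_lt (by have := (c i).isLt; have := hbig i; omega)
      unfold Nat.ModEq at h
      rw [h, this]
    unfold col
    rw [hmod]
    generalize c i = x
    fin_cases x <;> rfl
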